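/- Let u be a minimal lace diagram with rank conditions r for (e_0,...,e_n). Then for every minimal lace diagram w with rank conditions r and w different from u, phi_u(S(w)) = 0; consequently phi_u(Q_r) = phi_u(S(u)), and this is a nonzero polynomial in the strand variables, homogeneous of degree d(r). -/

import Mathlib

open MvPolynomial

/-! Common setup.  Dots in columns, positions in permutations, and variable
indices are all 0-indexed: dot `q` (0-indexed) of column `i` is dot `q+1`
(1-indexed) in the paper, the variable `(i, j) : ℕ × ℕ` is the Chern root
`x^i_{j+1}`, and in the Schubert variable type `ℕ ⊕ ℕ`, `Sum.inl a` is
`x_{a+1}` and `Sum.inr b` is `y_{b+1}`. -/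

/-- Coxeter length = number of inversions of a (finitely supported) permutation of ℕ. -/
noncomputable def ell (w : Equiv.Perm ℕ) : ℕ :=
  {p : ℕ × ℕ | p.1 < p.2 ∧ w p.2 < w p.1}.ncard

/-- A finitely supported permutation of ℕ. -/
def FinSupp (w : Equiv.Perm ℕ) : Prop := {x | w x ≠ x}.Finite

/-- A lace diagram for the dimension vector `e 0, …, e n`, encoded as a sequence
`w 1, …, w n` of finitely supported permutations of ℕ (normalized so that
`w i = 1` outside `1 ≤ i ≤ n`): all descent positions of `w i` are `< e i` and
all descent positions of `(w i)⁻¹` are `< e (i-1)` (0-indexed positions). -/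
def IsLace (n : ℕ) (e : ℕ → ℕ) (w : ℕ → Equiv.Perm ℕ) : Prop :=
  (∀ i, i = 0 ∨ n < i → w i = 1) ∧
  ∀ i, 1 ≤ i → i ≤ n → FinSupp (w i) ∧
    (∀ k, w i (k + 1) < w i k → k < e i) ∧
    (∀ k, (w i)⁻¹ (k + 1) < (w i)⁻¹ k → k < e (i - 1))

/-- `chain w i k p = (w k)⁻¹ (⋯ ((w (i+1))⁻¹ p))` for `k ≥ i`, and `p` for `k ≤ i`. -/
def chain (w : ℕ → Equiv.Perm ℕ) (i : ℕ) : ℕ → ℕ → ℕ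
  | 0, p => p
  | k + 1, p => if k + 1 ≤ i then p else (w (k + 1))⁻¹ (chain w i k p)

/-- The rank conditions of a lace diagram: `rank e w i j` is the number of dots
`p < e i` of column `i` whose strand continues through column `j`. -/
noncomputable def rank (e : ℕ → ℕ) (w : ℕ → Equiv.Perm ℕ) (i j : ℕ) : ℕ :=
  {p : ℕ | p < e i ∧ ∀ k, i < k → k ≤ j → chain w i k p < e k}.ncard

/-- The lace diagram `w` has rank conditions `r` (for `0 ≤ i ≤ j ≤ n`). -/
def RankEq (n : ℕ) (e : ℕ → ℕ) (w : ℕ → Equiv.Perm ℕ) (r : ℕ → ℕ → ℕ) : Prop :=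
  ∀ i j, i ≤ j → j ≤ n → rank e w i j = r i j

/-- The length of a lace diagram. -/
noncomputable def diagLength (n : ℕ) (w : ℕ → Equiv.Perm ℕ) : ℕ :=
  ∑ i ∈ Finset.Icc 1 n, ell (w i)

/-- The expected codimension `d(r)`. -/
def codim (n : ℕ) (r : ℕ → ℕ → ℕ) : ℕ :=
  ∑ i ∈ Finset.range (n + 1), ∑ j ∈ Finset.range (n + 1),
    if i < j then (r i (j - 1) - r i j) * (r (i + 1) j - r i j) else 0

/-- A minimal lace diagram: its length equals the expected codimension of its
rank conditions. -/
def IsMinimal (n : ℕ) (e : ℕ → ℕ) (w : ℕ → Equiv.Perm ℕ) : Prop :=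
  IsLace n e w ∧ diagLength n w = codim n (rank e w)

/-- The longest element of `S m` (0-indexed), as a permutation of ℕ. -/
def longest (m : ℕ) : Equiv.Perm ℕ where
  toFun i := if i < m then m - 1 - i else i
  invFun i := if i < m then m - 1 - i else i
  left_inv i := by dsimp only; split_ifs <;> omega
  right_inv i := by dsimp only; split_ifs <;> omega

/-- Interchanging the x-variables `x (i+1)` and `x (i+2)` (0-indexed: `inl i`
and `inl (i+1)`). -/
noncomputable def sX (i : ℕ) (f : MvPolynomial (ℕ ⊕ ℕ) ℤ) : MvPolynomial (ℕ ⊕ ℕ) ℤ :=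
  rename (Sum.map (Equiv.swap i (i + 1)) id) f

/-- `S` is the family of double Schubert polynomials `S w = 𝔖_w(x; y)`:
it takes the prescribed product value on each longest element, it satisfies the
divided difference recursion `(x i - x (i+1)) * S (w * s i) = S w - (S w)^{s i}`
when `w` has a descent at `i` and `(S w)^{s i} = S w` otherwise, and only the
variables up to the last descents of `w` and `w⁻¹` occur in `S w`. -/
def IsSchubertFamily (S : Equiv.Perm ℕ → MvPolynomial (ℕ ⊕ ℕ) ℤ) : Prop :=
  (∀ m : ℕ, S (longest m) =
      ∏ i ∈ Finset.range m, ∏ j ∈ Finset.range m,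
        if i + j + 2 ≤ m then X (Sum.inl i) - X (Sum.inr j) else 1) ∧
  (∀ w : Equiv.Perm ℕ, FinSupp w → ∀ i : ℕ,
    (w (i + 1) < w i →
      (X (Sum.inl i) - X (Sum.inl (i + 1))) * S (w * Equiv.swap i (i + 1)) =
        S w - sX i (S w)) ∧
    (w i < w (i + 1) → sX i (S w) = S w)) ∧
  (∀ w : Equiv.Perm ℕ, FinSupp w → ∀ k l : ℕ,
    (∀ t, k ≤ t → ¬w (t + 1) < w t) → (∀ t, l ≤ t → ¬w⁻¹ (t + 1) < w⁻¹ t) →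
    ∀ v ∈ (S w).vars, (∃ a < k, v = Sum.inl a) ∨ (∃ b < l, v = Sum.inr b))

/-- The product `S(w) = 𝔖_{w 1}(x^1;x^0) ⋯ 𝔖_{w n}(x^n;x^{n-1})`, in the
variables `(i, j) = x^i_{j+1}`. -/
noncomputable def Sprod (n : ℕ) (S : Equiv.Perm ℕ → MvPolynomial (ℕ ⊕ ℕ) ℤ)
    (w : ℕ → Equiv.Perm ℕ) : MvPolynomial (ℕ × ℕ) ℤ :=
  ∏ i ∈ Finset.Icc 1 n,
    rename (Sum.elim (fun a => (i, a)) (fun b => (i - 1, b))) (S (w i))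

/-- The component-formula polynomial `Q_r`: the sum of `Sprod n S w` over all
minimal lace diagrams `w` with rank conditions `r`. -/
noncomputable def Qpoly (n : ℕ) (e : ℕ → ℕ) (r : ℕ → ℕ → ℕ)
    (S : Equiv.Perm ℕ → MvPolynomial (ℕ ⊕ ℕ) ℤ) : MvPolynomial (ℕ × ℕ) ℤ :=
  ∑ᶠ (w : ℕ → Equiv.Perm ℕ) (_ : IsMinimal n e w ∧ RankEq n e w r), Sprod n S w

/-- The shifted permutation `1^k × w`: fixes `0, …, k-1` (0-indexed) and sends
`k + j` to `k + w j`. -/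
def shiftPerm (k : ℕ) (w : Equiv.Perm ℕ) : Equiv.Perm ℕ where
  toFun j := if j < k then j else w (j - k) + k
  invFun j := if j < k then j else w⁻¹ (j - k) + k
  left_inv j := by
    dsimp only
    by_cases h : j < k
    · simp [h]
    · have h1 : ¬ w (j - k) + k < k := by omega
      simp only [if_neg h, if_neg h1, Nat.add_sub_cancel, Equiv.Perm.inv_def, Equiv.symm_apply_apply]
      omega
  right_inv j := by
    dsimp only
    by_cases h : j < k
    · simp [h]
    · have h1 : ¬ w⁻¹ (j - k) + k < k := by omega
      simp only [if_neg h, if_neg h1, Nat.add_sub_cancel, Equiv.Perm.inv_def, Equiv.apply_symm_apply]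
      split_ifs <;> omega

/-- The lace diagram `(1^k × w 1, …, 1^k × w n)`. -/
def shiftDiag (k : ℕ) (w : ℕ → Equiv.Perm ℕ) : ℕ → Equiv.Perm ℕ :=
  fun i => shiftPerm k (w i)

/-- The transformation of lace diagrams, allowed at `(i, j)` (0-indexed `j`,
so `j + 1 < e i`) when exactly one of the two descent conditions holds; it
replaces `w i` by `w i * s j` and `w (i+1)` by `s j * w (i+1)`. -/
def TransStep (n : ℕ) (e : ℕ → ℕ) (w w' : ℕ → Equiv.Perm ℕ) : Prop :=
  IsLace n e w ∧ ∃ i j, 1 ≤ i ∧ i + 1 ≤ n ∧ j + 1 < e i ∧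
    Xor' (w i (j + 1) < w i j) ((w (i + 1))⁻¹ (j + 1) < (w (i + 1))⁻¹ j) ∧
    w' = Function.update (Function.update w i (w i * Equiv.swap j (j + 1))) (i + 1)
          (Equiv.swap j (j + 1) * w (i + 1))

/-- The column where the strand through dot `q` of column `c` starts. -/
def startCol (e : ℕ → ℕ) (w : ℕ → Equiv.Perm ℕ) : ℕ → ℕ → ℕ
  | 0, _ => 0
  | c + 1, q => if w (c + 1) q < e c then startCol e w c (w (c + 1) q) else c + 1

/-- The starting dot `(column, position)` of the strand through dot `q` of column `c`. -/
def startDot (e : ℕ → ℕ) (w : ℕ → Equiv.Perm ℕ) : ℕ → ℕ → ℕ × ℕ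
  | 0, q => (0, q)
  | c + 1, q => if w (c + 1) q < e c then startDot e w c (w (c + 1) q) else (c + 1, q)

def endColAux (e : ℕ → ℕ) (w : ℕ → Equiv.Perm ℕ) : ℕ → ℕ → ℕ → ℕ
  | 0, c, _ => c
  | f + 1, c, q =>
      if (w (c + 1))⁻¹ q < e (c + 1) then endColAux e w f (c + 1) ((w (c + 1))⁻¹ q) else c

/-- The column where the strand through dot `q` of column `c` terminates. -/
def endCol (n : ℕ) (e : ℕ → ℕ) (w : ℕ → Equiv.Perm ℕ) (c q : ℕ) : ℕ :=
  endColAux e w (n - c) c q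

/-- `w` is the left-most lace diagram (for its rank conditions): it is a lace
diagram such that in every column the strands are sorted from top to bottom by
starting column (ascending) and then by terminating column (descending), exactly
as produced by the construction which adds, for `i = 0, …, n` and `j = n, …, i`,
all strands from column `i` to column `j` to the bottom of the diagram; and
strands with the same start and end do not cross. -/
def IsLeftmost (n : ℕ) (e : ℕ → ℕ) (w : ℕ → Equiv.Perm ℕ) : Prop :=
  IsLace n e w ∧
  (∀ c, c ≤ n → ∀ q q', q < q' → q' < e c →
    startCol e w c q < startCol e w c q' ∨
      (startCol e w c q = startCol e w c q' ∧ endCol n e w c q' ≤ endCol n e w c q)) ∧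
  (∀ c, 1 ≤ c → c ≤ n → ∀ q q', q < q' → q' < e c →
    startCol e w c q = startCol e w c q' → endCol n e w c q = endCol n e w c q' →
    w c q < w c q')

/-- The substitution homomorphism `φ_u` of a lace diagram `u`: it sends the
variable `x^i_j` to the variable `b_S` of the strand `S` of `u` through dot
`(i, j)`, where the strand variables are realized as the variables indexed by
the starting dots of strands. -/
noncomputable def phiMap (e : ℕ → ℕ) (u : ℕ → Equiv.Perm ℕ) :
    MvPolynomial (ℕ × ℕ) ℤ →ₐ[ℤ] MvPolynomial (ℕ × ℕ) ℤ :=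
  rename fun p => startDot e u p.1 p.2

/-- The product of the simple transpositions `s (i+1)` (1-indexed) for `i` in `l`. -/
def wordProd (l : List ℕ) : Equiv.Perm ℕ := (l.map fun i => Equiv.swap i (i + 1)).prod

/-- A reduced word for a finitely supported permutation of ℕ. -/
def IsReducedWord (u : Equiv.Perm ℕ) (l : List ℕ) : Prop :=
  wordProd l = u ∧ l.length = ell u

/-- Bruhat order: some reduced word for `u` contains a subword which is a
reduced word for `w`. -/
def BruhatLE (w u : Equiv.Perm ℕ) : Prop :=
  ∃ l l', IsReducedWord u l ∧ IsReducedWord w l' ∧ l'.Sublist l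

namespace St15

open Equiv

/-- inversion set -/
def invSet (w : Equiv.Perm ℕ) : Set (ℕ × ℕ) := {p : ℕ × ℕ | p.1 < p.2 ∧ w p.2 < w p.1}

lemma ell_def (w : Equiv.Perm ℕ) : ell w = (invSet w).ncard := rfl

def Bnd (w : Equiv.Perm ℕ) (N : ℕ) : Prop := ∀ k, N ≤ k → w k = k

lemma exists_bnd {w : Equiv.Perm ℕ} (h : FinSupp w) : ∃ N, Bnd w N := by
  obtain ⟨N, hN⟩ := h.bddAbove
  refine ⟨N + 1, fun k hk => by_contra fun hne => ?_⟩
  have := hN (Set.mem_setOf.mpr hne)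
  omega

lemma bnd_lt {w : Equiv.Perm ℕ} {N : ℕ} (hN : Bnd w N) {p : ℕ} (hp : p < N) : w p < N := by
  by_contra h
  push_neg at h
  have h1 : w (w p) = w p := hN _ h
  have := w.injective h1
  omega

lemma invSet_subset {w : Equiv.Perm ℕ} {N : ℕ} (hN : Bnd w N) :
    invSet w ⊆ Set.Iio N ×ˢ Set.Iio N := by
  rintro ⟨p, q⟩ ⟨h1, h2⟩
  simp only [Set.mem_prod, Set.mem_Iio]
  dsimp only at h1 h2
  by_cases hp : p < N
  · refine ⟨hp, ?_⟩
    by_contra hq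
    push_neg at hq
    have := hN q hq
    have := bnd_lt hN hp
    omega
  · push_neg at hp
    have hq : N ≤ q := by omega
    have := hN q hq
    have := hN p hp
    omega

lemma invSet_finite {w : Equiv.Perm ℕ} (h : FinSupp w) : (invSet w).Finite := by
  obtain ⟨N, hN⟩ := exists_bnd h
  exact Set.Finite.subset ((Set.finite_Iio N).prod (Set.finite_Iio N)) (invSet_subset hN)

lemma finSupp_mul_swap {w : Equiv.Perm ℕ} (h : FinSupp w) (a b : ℕ) :
    FinSupp (w * Equiv.swap a b) := by
  apply Set.Finite.subset (h.union ((Set.finite_singleton a).union (Set.finite_singleton b)))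
  intro x hx
  by_cases hxa : x = a
  · right; left; exact hxa
  by_cases hxb : x = b
  · right; right; exact hxb
  left
  simpa [Equiv.Perm.mul_apply, Equiv.swap_apply_of_ne_of_ne hxa hxb] using hx

lemma bnd_mul_swap {w : Equiv.Perm ℕ} {N i : ℕ} (h : Bnd w N) (hi : i + 1 < N) :
    Bnd (w * Equiv.swap i (i + 1)) N := by
  intro k hk
  have h1 : k ≠ i := by omega
  have h2 : k ≠ i + 1 := by omega
  simp [Equiv.Perm.mul_apply, Equiv.swap_apply_of_ne_of_ne h1 h2, h k hk]

lemma ell_mul_swap_ascent {w : Equiv.Perm ℕ} {i : ℕ} (hw : FinSupp w) (h : w i < w (i + 1)) :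
    ell (w * Equiv.swap i (i + 1)) = ell w + 1 := by
  set s := Equiv.swap i (i + 1) with hs
  set u := w * s with hu
  have hsapp : ∀ x, s x = if x = i then i + 1 else if x = i + 1 then i else x := by
    intro x; rw [hs, Equiv.swap_apply_def]
  have huapp : ∀ x, u x = w (s x) := fun x => rfl
  have horder : ∀ a b : ℕ, a < b → ¬(a = i ∧ b = i + 1) → s a < s b := by
    intro a b hab hne
    rw [hsapp, hsapp]
    split_ifs <;> omega
  have himage : invSet u = insert (i, i + 1) ((fun p : ℕ × ℕ => (s p.1, s p.2)) '' invSet w) := by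
    ext ⟨a, b⟩
    simp only [Set.mem_insert_iff, Set.mem_image, invSet, Set.mem_setOf_eq, Prod.mk.injEq,
      Prod.exists]
    constructor
    · rintro ⟨hab, hval⟩
      by_cases hcase : a = i ∧ b = i + 1
      · left; exact ⟨hcase.1, hcase.2⟩
      · right
        refine ⟨s a, s b, ⟨horder a b hab hcase, ?_⟩, ?_, ?_⟩
        · rw [huapp, huapp] at hval
          simpa [hs, Equiv.swap_apply_self] using hval
        · simp [hs, Equiv.swap_apply_self]
        · simp [hs, Equiv.swap_apply_self]
      
    · rintro (⟨ha, hb⟩ | ⟨p, q, ⟨hpq, hval⟩, hp, hq⟩)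
      · refine ⟨by omega, ?_⟩
        rw [ha, hb, huapp, huapp, hs, Equiv.swap_apply_left, Equiv.swap_apply_right]
        exact h
      · subst hp; subst hq
        have hne : ¬(p = i ∧ q = i + 1) := by
          rintro ⟨rfl, rfl⟩; omega
        refine ⟨horder p q hpq hne, ?_⟩
        rw [huapp, huapp]
        simpa [hs, Equiv.swap_apply_self] using hval
  have hsinj : Function.Injective (fun p : ℕ × ℕ => (s p.1, s p.2)) := by
    intro p q hpq
    simp only [Prod.mk.injEq] at hpq
    obtain ⟨h1, h2⟩ := hpq
    exact Prod.ext (s.injective h1) (s.injective h2)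
  have hnotmem : (i, i + 1) ∉ (fun p : ℕ × ℕ => (s p.1, s p.2)) '' invSet w := by
    rintro ⟨⟨p, q⟩, hmem, heq⟩
    simp only [Prod.mk.injEq] at heq
    have hp : p = i + 1 := by
      have h2 := congrArg s heq.1
      rwa [hs, Equiv.swap_apply_self, Equiv.swap_apply_left] at h2
    have hq : q = i := by
      have h2 := congrArg s heq.2
      rwa [hs, Equiv.swap_apply_self, Equiv.swap_apply_right] at h2
    have := hmem.1
    omega
  have hfin : ((fun p : ℕ × ℕ => (s p.1, s p.2)) '' invSet w).Finite :=
    (invSet_finite hw).image _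
  rw [ell_def, ell_def, himage, Set.ncard_insert_of_notMem hnotmem hfin,
    Set.ncard_image_of_injective _ hsinj]

lemma ell_mul_swap_descent {w : Equiv.Perm ℕ} {i : ℕ} (hw : FinSupp w) (h : w (i + 1) < w i) :
    ell w = ell (w * Equiv.swap i (i + 1)) + 1 := by
  set u := w * Equiv.swap i (i + 1) with hu
  have hufin : FinSupp u := finSupp_mul_swap hw i (i + 1)
  have hui : u i = w (i + 1) := by simp [hu, Equiv.Perm.mul_apply]
  have hui1 : u (i + 1) = w i := by simp [hu, Equiv.Perm.mul_apply]
  have hasc : u i < u (i + 1) := by rw [hui, hui1]; exact h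
  have := ell_mul_swap_ascent hufin hasc
  have huw : u * Equiv.swap i (i + 1) = w := by
    rw [hu, mul_assoc, Equiv.swap_mul_self, mul_one]
  rw [huw] at this
  omega

def pairsBelow (N : ℕ) : Finset (ℕ × ℕ) :=
  (Finset.range N ×ˢ Finset.range N).filter fun p => p.1 < p.2

def CN (N : ℕ) : ℕ := (pairsBelow N).card

lemma mem_pairsBelow {N a b : ℕ} : (a, b) ∈ pairsBelow N ↔ a < b ∧ b < N := by
  simp only [pairsBelow, Finset.mem_filter, Finset.mem_product, Finset.mem_range]
  omega

lemma longest_apply (m k : ℕ) : longest m k = if k < m then m - 1 - k else k := rfl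

lemma finSupp_longest (m : ℕ) : FinSupp (longest m) := by
  apply Set.Finite.subset (Set.finite_Iio m)
  intro x hx
  simp only [Set.mem_setOf_eq, longest_apply] at hx
  by_contra h
  simp only [Set.mem_Iio, not_lt] at h
  rw [if_neg (by omega)] at hx
  exact hx rfl

lemma bnd_longest (m : ℕ) : Bnd (longest m) m := by
  intro k hk
  rw [longest_apply, if_neg (by omega)]

lemma invSet_longest (m : ℕ) : invSet (longest m) = ↑(pairsBelow m) := by
  ext ⟨p, q⟩
  simp only [invSet, Set.mem_setOf_eq, Finset.coe_filter, longest_apply,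
    Finset.mem_coe, mem_pairsBelow]
  constructor
  · rintro ⟨h1, h2⟩
    split_ifs at h2 <;> omega
  · rintro ⟨h1, h2⟩
    refine ⟨h1, ?_⟩
    rw [if_pos (by omega), if_pos (by omega)]
    omega

lemma ell_longest (m : ℕ) : ell (longest m) = CN m := by
  rw [ell_def, invSet_longest, Set.ncard_coe_finset]; rfl

lemma ell_le_CN {w : Equiv.Perm ℕ} {N : ℕ} (hbnd : Bnd w N) : ell w ≤ CN N := by
  rw [ell_def, show CN N = (↑(pairsBelow N) : Set (ℕ × ℕ)).ncard from (Set.ncard_coe_finset _).symm]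
  apply Set.ncard_le_ncard _ (Finset.finite_toSet _)
  rintro ⟨a, b⟩ hp
  have h2 := invSet_subset hbnd hp
  simp only [Set.mem_prod, Set.mem_Iio] at h2
  have h3 : a < b := hp.1
  have h4 : b < N := h2.2
  simp only [Finset.mem_coe, mem_pairsBelow]
  exact ⟨h3, h4⟩

lemma eq_longest_of_desc {w : Equiv.Perm ℕ} {N : ℕ} (hbnd : Bnd w N)
    (hdec : ∀ i, i + 1 < N → w (i + 1) < w i) : w = longest N := by
  have upper : ∀ i, i < N → w i + i + 1 ≤ N := by
    intro i
    induction i with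
    | zero => intro h0; have := bnd_lt hbnd h0; omega
    | succ i ih =>
      intro hi
      have h1 := hdec i hi
      have h2 := ih (by omega)
      omega
  have lower : ∀ j i, i < N → N - i = j + 1 → N - 1 - i ≤ w i := by
    intro j
    induction j with
    | zero => intro i hi hj; omega
    | succ j ih =>
      intro i hi hj
      have h1 := hdec i (by omega)
      have h2 := ih (i + 1) (by omega) (by omega)
      omega
  apply Equiv.ext
  intro k
  rw [longest_apply]
  by_cases hk : k < N
  · rw [if_pos hk]
    have h1 := upper k hk
    have h2 := lower (N - k - 1) k hk (by omega)
    omega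
  · rw [if_neg hk]
    exact hbnd k (by omega)

lemma exists_ascent {w : Equiv.Perm ℕ} {N : ℕ} (hbnd : Bnd w N) (hne : w ≠ longest N) :
    ∃ i, i + 1 < N ∧ w i < w (i + 1) := by
  by_contra h
  push_neg at h
  apply hne
  apply eq_longest_of_desc hbnd
  intro i hi
  have h1 := h i hi
  have h2 : w (i + 1) ≠ w i := fun he => by have := w.injective he; omega
  omega

lemma eq_longest_of_ell {w : Equiv.Perm ℕ} {N : ℕ} (hfin : FinSupp w) (hbnd : Bnd w N)
    (hell : ell w = CN N) : w = longest N := by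
  have hsub : invSet w ⊆ ↑(pairsBelow N) := by
    rintro ⟨a, b⟩ hp
    have h2 := invSet_subset hbnd hp
    simp only [Set.mem_prod, Set.mem_Iio] at h2
    have h3 : a < b := hp.1
    have h4 : b < N := h2.2
    simp only [Finset.mem_coe, mem_pairsBelow]
    exact ⟨h3, h4⟩
  have heq : invSet w = ↑(pairsBelow N) := by
    apply Set.eq_of_subset_of_ncard_le hsub _ (Finset.finite_toSet _)
    rw [Set.ncard_coe_finset, ← ell_def w, hell]; rfl
  apply eq_longest_of_desc hbnd
  intro i hi
  have : (i, i + 1) ∈ invSet w := by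
    rw [heq]
    simp only [Finset.mem_coe, mem_pairsBelow]
    omega
  exact this.2

lemma le_self_of_noDescent {w : Equiv.Perm ℕ} {N E : ℕ} (hbnd : Bnd w N)
    (hnd : ∀ t, E ≤ t → ¬ w (t + 1) < w t) : ∀ k, E ≤ k → w k ≤ k := by
  have key : ∀ d k, E ≤ k → N - k ≤ d → w k ≤ k := by
    intro d
    induction d with
    | zero => intro k hk hd; rw [hbnd k (by omega)]
    | succ d ih =>
      intro k hk hd
      by_cases h : N ≤ k
      · rw [hbnd k h]
      · have h1 : w k ≤ w (k + 1) := not_lt.mp (hnd k hk)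
        have h2 : w k ≠ w (k + 1) := fun he => by have := w.injective he; omega
        have h3 := ih (k + 1) (by omega) (by omega)
        omega
  intro k hk
  exact key (N - k) k hk le_rfl

lemma mono_of_noDescent {w : Equiv.Perm ℕ} {E : ℕ}
    (hnd : ∀ t, E ≤ t → ¬ w (t + 1) < w t) : ∀ d a, E ≤ a → w a + d ≤ w (a + d) := by
  intro d
  induction d with
  | zero => intro a _; simp
  | succ d ih =>
    intro a ha
    have h1 := ih a ha
    have h2 : w (a + d) ≤ w (a + d + 1) := not_lt.mp (hnd (a + d) (by omega))
    have h3 : w (a + d) ≠ w (a + d + 1) := fun he => by have := w.injective he; omega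
    have : a + (d + 1) = a + d + 1 := by omega
    rw [this]
    omega

lemma eq_one_of_ell_eq_zero {w : Equiv.Perm ℕ} (hfin : FinSupp w) (h : ell w = 0) : w = 1 := by
  have hemp : invSet w = ∅ := ((Set.ncard_eq_zero (invSet_finite hfin)).mp h)
  have hni : ∀ p q, p < q → w p < w q := by
    intro p q hpq
    by_contra hc
    push_neg at hc
    have hne : w q ≠ w p := fun he => by have := w.injective he; omega
    have : (p, q) ∈ invSet w := ⟨hpq, lt_of_le_of_ne hc hne⟩
    rw [hemp] at this
    exact this
  have h1 : ∀ k, k ≤ w k := by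
    intro k
    induction k with
    | zero => omega
    | succ k ih => have := hni k (k + 1) (by omega); omega
  obtain ⟨N, hbnd⟩ := exists_bnd hfin
  have h2 : ∀ k, w k ≤ k := fun k =>
    le_self_of_noDescent hbnd (fun t _ => not_lt.mpr (le_of_lt (hni t (t + 1) (by omega))))
      k (Nat.zero_le k)
  apply Equiv.ext
  intro k
  have := h1 k
  have := h2 k
  simp only [Equiv.Perm.coe_one, id_eq]
  omega

end St15
namespace St15

lemma finSupp_of_bnd {w : Equiv.Perm ℕ} {N : ℕ} (h : Bnd w N) : FinSupp w := by
  apply Set.Finite.subset (Set.finite_Iio N)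
  intro x hx
  simp only [Set.mem_Iio]
  by_contra hc
  exact hx (h x (by omega))

def delPerm (v : Equiv.Perm ℕ) (k : ℕ) (hk : v k = 0) : Equiv.Perm ℕ where
  toFun i := v (if i < k then i else i + 1) - 1
  invFun j := if v.symm (j + 1) < k then v.symm (j + 1) else v.symm (j + 1) - 1
  left_inv := by
    intro i
    dsimp only
    have htk : (if i < k then i else i + 1) ≠ k := by split_ifs <;> omega
    have hvt : v (if i < k then i else i + 1) ≠ 0 :=
      fun h0 => htk (v.injective (h0.trans hk.symm))
    have h1 : v (if i < k then i else i + 1) - 1 + 1 = v (if i < k then i else i + 1) := by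
      omega
    rw [h1, Equiv.symm_apply_apply]
    split_ifs <;> omega
  right_inv := by
    intro j
    dsimp only
    have hp : v (v.symm (j + 1)) = j + 1 := v.apply_symm_apply _
    have hpk : v.symm (j + 1) ≠ k := by
      intro h0
      rw [h0, hk] at hp
      omega
    by_cases hc : v.symm (j + 1) < k
    · rw [if_pos hc, if_pos hc, hp]; omega
    · rw [if_neg hc, if_neg (by omega)]
      have : v.symm (j + 1) - 1 + 1 = v.symm (j + 1) := by omega
      rw [this, hp]; omega

lemma delPerm_apply_lt {v : Equiv.Perm ℕ} {k : ℕ} (hk : v k = 0) {i : ℕ} (h : i < k) :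
    delPerm v k hk i = v i - 1 := by
  show v (if i < k then i else i + 1) - 1 = v i - 1
  rw [if_pos h]

lemma delPerm_apply_ge {v : Equiv.Perm ℕ} {k : ℕ} (hk : v k = 0) {i : ℕ} (h : k ≤ i) :
    delPerm v k hk i = v (i + 1) - 1 := by
  show v (if i < k then i else i + 1) - 1 = v (i + 1) - 1
  rw [if_neg (by omega)]

lemma bnd_delPerm {v : Equiv.Perm ℕ} {k N : ℕ} (hk : v k = 0) (hbnd : Bnd v N) :
    Bnd (delPerm v k hk) (N + k) := by
  intro i hi
  have h1 : k ≤ i := by omega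
  rw [delPerm_apply_ge hk h1, hbnd (i + 1) (by omega)]; omega

lemma finSupp_delPerm {v : Equiv.Perm ℕ} {k : ℕ} (hk : v k = 0) (hfin : FinSupp v) :
    FinSupp (delPerm v k hk) := by
  obtain ⟨N, hN⟩ := exists_bnd hfin
  exact finSupp_of_bnd (bnd_delPerm hk hN)

lemma ell_delPerm {v : Equiv.Perm ℕ} {k : ℕ} (hfin : FinSupp v) (hk : v k = 0) :
    ell v = ell (delPerm v k hk) + k := by
  classical
  set v' := delPerm v k hk with hv'
  set A : Set (ℕ × ℕ) := ↑((Finset.range k).image fun i => (i, k)) with hA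
  have hmemA : ∀ p : ℕ × ℕ, p ∈ A ↔ p.1 < k ∧ p.2 = k := by
    rintro ⟨a, b⟩
    simp only [hA, Finset.coe_image, Set.mem_image, Finset.mem_coe, Finset.mem_range,
      Prod.mk.injEq]
    constructor
    · rintro ⟨i, hi, rfl, rfl⟩; exact ⟨hi, rfl⟩
    · rintro ⟨h1, rfl⟩; exact ⟨a, h1, rfl, rfl⟩
  have hAsub : A ⊆ invSet v := by
    rintro ⟨a, b⟩ hab
    rw [hmemA] at hab
    obtain ⟨h1, h2⟩ := hab
    dsimp only at h1 h2
    have hva : v a ≠ 0 := fun h0 => (by omega : a ≠ k) (v.injective (h0.trans hk.symm))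
    refine ⟨by dsimp only; omega, ?_⟩
    dsimp only
    rw [h2, hk]
    omega
  set ins : ℕ → ℕ := fun a => if a < k then a else a + 1 with hins
  have hv'app : ∀ a, v' a = v (ins a) - 1 := fun a => rfl
  have hinsk : ∀ a, ins a ≠ k := by intro a; rw [hins]; dsimp only; split_ifs <;> omega
  have hvins : ∀ a, v (ins a) ≠ 0 := fun a h0 => hinsk a (v.injective (h0.trans hk.symm))
  have hB : invSet v \ A = (fun p : ℕ × ℕ => (ins p.1, ins p.2)) '' invSet v' := by
    ext ⟨p, q⟩
    constructor
    · rintro ⟨⟨hpq, hval⟩, hnA⟩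
      rw [hmemA] at hnA
      dsimp only at hpq hval hnA
      have hqk : q ≠ k := by
        intro h0
        exact hnA ⟨by omega, h0⟩
      have hpk : p ≠ k := by
        intro h0
        rw [h0, hk] at hval
        omega
      refine ⟨(if p < k then p else p - 1, if q < k then q else q - 1), ⟨?_, ?_⟩, ?_⟩
      · dsimp only; split_ifs <;> omega
      · dsimp only
        rw [hv'app, hv'app, hins]
        dsimp only
        have e1 : (if (if p < k then p else p - 1) < k then (if p < k then p else p - 1)
            else (if p < k then p else p - 1) + 1) = p := by split_ifs <;> omega
        have e2 : (if (if q < k then q else q - 1) < k then (if q < k then q else q - 1)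
            else (if q < k then q else q - 1) + 1) = q := by split_ifs <;> omega
        rw [e1, e2]
        have : v q ≠ 0 := fun h0 => hqk (v.injective (h0.trans hk.symm))
        omega
      · rw [hins]
        dsimp only
        have e1 : (if (if p < k then p else p - 1) < k then (if p < k then p else p - 1)
            else (if p < k then p else p - 1) + 1) = p := by split_ifs <;> omega
        have e2 : (if (if q < k then q else q - 1) < k then (if q < k then q else q - 1)
            else (if q < k then q else q - 1) + 1) = q := by split_ifs <;> omega
        rw [e1, e2]
    · rintro ⟨⟨a, b⟩, ⟨hab, hval⟩, heq⟩
      dsimp only at hab hval heq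
      rw [hv'app, hv'app] at hval
      have h1 := hvins a
      have h2 := hvins b
      rw [← heq]
      constructor
      · constructor
        · dsimp only
          rw [hins]; dsimp only; split_ifs <;> omega
        · dsimp only
          omega
      · rw [hmemA]
        dsimp only
        intro hcon
        exact hinsk b hcon.2
  have hinj : Function.Injective (fun p : ℕ × ℕ => (ins p.1, ins p.2)) := by
    have : Function.Injective ins := by
      intro a b hab
      rw [hins] at hab
      dsimp only at hab
      split_ifs at hab <;> omega
    intro p q hpq
    simp only [Prod.mk.injEq] at hpq
    exact Prod.ext (this hpq.1) (this hpq.2)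
  have hAfin : A.Finite := Finset.finite_toSet _
  have hBfin : (invSet v \ A).Finite := ((invSet_finite hfin).diff (t := A))
  have hsplit : invSet v = A ∪ (invSet v \ A) := (Set.union_diff_cancel hAsub).symm
  have hcardA : A.ncard = k := by
    rw [hA, Set.ncard_coe_finset, Finset.card_image_of_injective _
      (fun a b hab => (Prod.ext_iff.mp hab).1), Finset.card_range]
  rw [ell_def, hsplit, Set.ncard_union_eq Set.disjoint_sdiff_right hAfin hBfin, hB,
    Set.ncard_image_of_injective _ hinj, ← ell_def, hcardA]
  omega

lemma longest_eq_one {m : ℕ} (h : m ≤ 1) : longest m = 1 := by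
  apply Equiv.ext
  intro k
  rw [longest_apply]
  simp only [Equiv.Perm.coe_one, id_eq]
  split_ifs <;> omega

lemma CN_succ (m : ℕ) : CN (m + 1) = CN m + m := by
  classical
  have hsplit : pairsBelow (m + 1) =
      pairsBelow m ∪ (Finset.range m).image (fun p => (p, m)) := by
    ext ⟨a, b⟩
    simp only [mem_pairsBelow, Finset.mem_union, Finset.mem_image, Finset.mem_range,
      Prod.mk.injEq]
    constructor
    · rintro ⟨h1, h2⟩
      by_cases hb : b = m
      · right; exact ⟨a, by omega, rfl, hb.symm ▸ rfl⟩
      · left; constructor <;> omega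
    · rintro (⟨h1, h2⟩ | ⟨p, hp, h1, h2⟩)
      · constructor <;> omega
      · constructor <;> omega
  have hdisj : Disjoint (pairsBelow m) ((Finset.range m).image (fun p => (p, m))) := by
    rw [Finset.disjoint_left]
    rintro ⟨a, b⟩ h1 h2
    rw [mem_pairsBelow] at h1
    simp only [Finset.mem_image, Finset.mem_range, Prod.mk.injEq] at h2
    obtain ⟨p, hp, h3, h4⟩ := h2
    omega
  rw [CN, CN, hsplit, Finset.card_union_of_disjoint hdisj,
    Finset.card_image_of_injective _ (fun a b hab => (Prod.ext_iff.mp hab).1),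
    Finset.card_range]

lemma ell_ge_CN : ∀ m (v : Equiv.Perm ℕ), FinSupp v → (∀ i, i < m → m - 1 - i ≤ v i) →
    CN m ≤ ell v ∧ (ell v = CN m → v = longest m) := by
  intro m
  induction m with
  | zero =>
    intro v hfin _
    refine ⟨Nat.zero_le _, fun h => ?_⟩
    have h0 : CN 0 = 0 := rfl
    rw [longest_eq_one (by omega)]
    exact eq_one_of_ell_eq_zero hfin (by omega)
  | succ m ih =>
    intro v hfin hcond
    have hk : v (v.symm 0) = 0 := v.apply_symm_apply 0
    set k := v.symm 0 with hkdef
    have hkm : m ≤ k := by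
      by_contra hlt
      push_neg at hlt
      have := hcond k (by omega)
      omega
    set v' := delPerm v k hk with hv'def
    have hfin' : FinSupp v' := finSupp_delPerm hk hfin
    have hcond' : ∀ i, i < m → m - 1 - i ≤ v' i := by
      intro i hi
      have h1 : i < k := by omega
      have h2 : v' i = v i - 1 := delPerm_apply_lt hk h1
      have h3 := hcond i (by omega)
      omega
    obtain ⟨hge, heq⟩ := ih v' hfin' hcond'
    have hell : ell v = ell v' + k := ell_delPerm hfin hk
    have hCN := CN_succ m
    refine ⟨by omega, fun he => ?_⟩
    have h1 : ell v' = CN m := by omega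
    have h2 : k = m := by omega
    have hv'l := heq h1
    apply Equiv.ext
    intro i
    rw [longest_apply]
    rcases lt_trichotomy i m with hi | hi | hi
    · have e1 : v' i = m - 1 - i := by rw [hv'l, longest_apply, if_pos hi]
      have e2 : v' i = v i - 1 := delPerm_apply_lt hk (by omega)
      have e3 := hcond i (by omega)
      rw [if_pos (by omega)]
      omega
    · rw [if_pos (by omega), hi, ← h2, hk]
      omega
    · rw [if_neg (by omega)]
      have e1 : v' (i - 1) = v i - 1 := by
        have := delPerm_apply_ge hk (show k ≤ i - 1 by omega)
        rwa [show i - 1 + 1 = i by omega] at this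
      have e2 : v' (i - 1) = i - 1 := by rw [hv'l, longest_apply, if_neg (by omega)]
      have e3 : v i ≠ 0 := fun h0 => (by omega : i ≠ k) (v.injective (h0.trans hk.symm))
      omega

end St15
namespace St15

open MvPolynomial

lemma X_sub_X_ne_zero {σ : Type*} [DecidableEq σ] {a b : σ} (h : a ≠ b) :
    (X a - X b : MvPolynomial σ ℤ) ≠ 0 := by
  intro h0
  have h1 := congrArg (coeff (Finsupp.single a 1)) h0
  rw [coeff_sub, coeff_zero] at h1
  have h2 : coeff (Finsupp.single a 1) (X a : MvPolynomial σ ℤ) = 1 := coeff_X_same a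
  have h3 : coeff (Finsupp.single a 1) (X b : MvPolynomial σ ℤ) = 0 := by
    rw [coeff_X', if_neg]
    intro hc
    have := Finsupp.single_left_injective (by norm_num : (1 : ℕ) ≠ 0) hc
    exact h this.symm
  rw [h2, h3] at h1
  norm_num at h1

lemma isHomogeneous_of_mul {σ : Type*} {p q : MvPolynomial σ ℤ} {d : ℕ}
    (hp : p.IsHomogeneous 1) (hp0 : p ≠ 0) (hpq : (p * q).IsHomogeneous (d + 1)) :
    q.IsHomogeneous d := by
  have hq := sum_homogeneousComponent q
  have hcomp : ∀ k, k ≠ d → homogeneousComponent k q = 0 := by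
    intro k hk
    by_contra h0
    have hkmem : k ∈ Finset.range (q.totalDegree + 1) := by
      rw [Finset.mem_range]
      by_contra hc
      exact h0 (homogeneousComponent_eq_zero k q (by omega))
    have h1 : homogeneousComponent (k + 1) (p * q) = p * homogeneousComponent k q := by
      conv_lhs => rw [← hq, Finset.mul_sum, map_sum]
      rw [Finset.sum_eq_single_of_mem k hkmem]
      · rw [homogeneousComponent_of_mem ((mem_homogeneousSubmodule _ _).mpr
          (hp.mul (homogeneousComponent_isHomogeneous k q))), if_pos (by omega)]
      · intro i _ hik
        rw [homogeneousComponent_of_mem ((mem_homogeneousSubmodule _ _).mpr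
          (hp.mul (homogeneousComponent_isHomogeneous i q))), if_neg (by omega)]
    have h2 : homogeneousComponent (k + 1) (p * q) = 0 := by
      rw [homogeneousComponent_of_mem ((mem_homogeneousSubmodule _ _).mpr hpq),
        if_neg (by omega)]
    rw [h2] at h1
    rcases mul_eq_zero.mp h1.symm with hc | hc
    · exact hp0 hc
    · exact h0 hc
  by_cases hd : d ∈ Finset.range (q.totalDegree + 1)
  · have heq : q = homogeneousComponent d q := by
      conv_lhs => rw [← hq]
      exact Finset.sum_eq_single_of_mem d hd (fun i _ hi => hcomp i hi)
    rw [heq]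
    exact homogeneousComponent_isHomogeneous d q
  · have heq : q = 0 := by
      conv_lhs => rw [← hq]
      apply Finset.sum_eq_zero
      intro i hi
      apply hcomp
      rintro rfl
      exact hd hi
    rw [heq]
    exact isHomogeneous_zero _ _ _

/-- The specialization `x_i ↦ y_{v(i)}`. -/
noncomputable def Fr (v : Equiv.Perm ℕ) : MvPolynomial (ℕ ⊕ ℕ) ℤ →ₐ[ℤ] MvPolynomial ℕ ℤ :=
  rename (Sum.elim (⇑v) id)

lemma Fr_X_inl (v : Equiv.Perm ℕ) (a : ℕ) : Fr v (X (Sum.inl a)) = X (v a) := rename_X _ _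

lemma Fr_X_inr (v : Equiv.Perm ℕ) (b : ℕ) : Fr v (X (Sum.inr b)) = X b := rename_X _ _

lemma Fr_sX (v : Equiv.Perm ℕ) (i : ℕ) (g : MvPolynomial (ℕ ⊕ ℕ) ℤ) :
    Fr v (sX i g) = Fr (v * Equiv.swap i (i + 1)) g := by
  show (rename _) ((rename _) g) = (rename _) g
  rw [rename_rename]
  have he : (Sum.elim (⇑v) id ∘ Sum.map (⇑(Equiv.swap i (i + 1))) id)
      = Sum.elim (⇑(v * Equiv.swap i (i + 1))) id := by
    funext x
    cases x <;> rfl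
  rw [he]

def SGood (S : Equiv.Perm ℕ → MvPolynomial (ℕ ⊕ ℕ) ℤ) (w : Equiv.Perm ℕ) : Prop :=
  (S w).IsHomogeneous (ell w) ∧
  (∀ v : Equiv.Perm ℕ, FinSupp v → ell v < ell w → Fr v (S w) = 0) ∧
  (∀ v : Equiv.Perm ℕ, FinSupp v → ell v = ell w → v ≠ w → Fr v (S w) = 0) ∧
  Fr w (S w) ≠ 0

lemma CN_eq_sum (m : ℕ) : CN m = ∑ i ∈ Finset.range m, ∑ j ∈ Finset.range m,
    if i + j + 2 ≤ m then 1 else 0 := by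
  classical
  have h1 : ∑ i ∈ Finset.range m, ∑ j ∈ Finset.range m, (if i + j + 2 ≤ m then 1 else 0)
      = ((Finset.range m ×ˢ Finset.range m).filter fun p => p.1 + p.2 + 2 ≤ m).card := by
    rw [Finset.card_filter, Finset.sum_product]
  rw [h1, CN]
  apply Finset.card_bij (fun p _ => (p.1, m - 1 - p.2))
  · rintro ⟨a, b⟩ hab
    rw [mem_pairsBelow] at hab
    simp only [Finset.mem_filter, Finset.mem_product, Finset.mem_range]
    omega
  · rintro ⟨a, b⟩ hab ⟨c, d⟩ hcd he
    rw [mem_pairsBelow] at hab hcd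
    simp only [Prod.mk.injEq] at he ⊢
    omega
  · rintro ⟨a, b⟩ hab
    simp only [Finset.mem_filter, Finset.mem_product, Finset.mem_range] at hab
    refine ⟨(a, m - 1 - b), ?_, ?_⟩
    · rw [mem_pairsBelow]
      omega
    · simp only [Prod.mk.injEq]
      exact ⟨trivial, by omega⟩

lemma Fr_longest (hS : IsSchubertFamily S) (m : ℕ) (v : Equiv.Perm ℕ) :
    Fr v (S (longest m)) = ∏ i ∈ Finset.range m, ∏ j ∈ Finset.range m,
      (if i + j + 2 ≤ m then (X (v i) - X j : MvPolynomial ℕ ℤ) else 1) := by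
  rw [hS.1 m, map_prod]
  apply Finset.prod_congr rfl
  intro i _
  rw [map_prod]
  apply Finset.prod_congr rfl
  intro j _
  split_ifs with h
  · rw [map_sub, Fr_X_inl, Fr_X_inr]
  · exact map_one _

lemma sgood_longest (hS : IsSchubertFamily S) (m : ℕ) : SGood S (longest m) := by
  have hcond : ∀ v : Equiv.Perm ℕ, Fr v (S (longest m)) ≠ 0 → ∀ i, i < m → m - 1 - i ≤ v i := by
    intro v hv i hi
    by_contra hc
    push_neg at hc
    apply hv
    rw [Fr_longest hS]
    apply Finset.prod_eq_zero (Finset.mem_range.mpr hi)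
    apply Finset.prod_eq_zero (Finset.mem_range.mpr (show v i < m by omega))
    rw [if_pos (by omega), sub_self]
  refine ⟨?_, ?_, ?_, ?_⟩
  · rw [hS.1 m, ell_longest, CN_eq_sum]
    apply IsHomogeneous.prod
    intro i _
    apply IsHomogeneous.prod
    intro j _
    split_ifs with h
    · exact (isHomogeneous_X _ _).sub (isHomogeneous_X _ _)
    · exact isHomogeneous_one _ _
  · intro v hfin hlt
    by_contra hv
    have h1 := (ell_ge_CN m v hfin (hcond v hv)).1
    rw [ell_longest] at hlt
    omega
  · intro v hfin heq hne
    by_contra hv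
    rw [ell_longest] at heq
    exact hne ((ell_ge_CN m v hfin (hcond v hv)).2 heq)
  · rw [Fr_longest hS]
    rw [Finset.prod_ne_zero_iff]
    intro i hi
    rw [Finset.prod_ne_zero_iff]
    intro j hj
    rw [Finset.mem_range] at hi hj
    split_ifs with h
    · apply X_sub_X_ne_zero
      rw [longest_apply, if_pos (by omega)]
      omega
    · exact one_ne_zero

lemma sgood_step (hS : IsSchubertFamily S) {W : Equiv.Perm ℕ} {i : ℕ}
    (hfinW : FinSupp W) (hdesc : W (i + 1) < W i) (hG : SGood S W) :
    SGood S (W * Equiv.swap i (i + 1)) := by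
  set w := W * Equiv.swap i (i + 1) with hwdef
  have hfinw : FinSupp w := finSupp_mul_swap hfinW i (i + 1)
  have hellW : ell W = ell w + 1 := ell_mul_swap_descent hfinW hdesc
  have hrec : (X (Sum.inl i) - X (Sum.inl (i + 1))) * S w = S W - sX i (S W) :=
    (hS.2.1 W hfinW i).1 hdesc
  have hwi : w i = W (i + 1) := by
    rw [hwdef]; simp [Equiv.Perm.mul_apply, Equiv.swap_apply_left]
  have hwi1 : w (i + 1) = W i := by
    rw [hwdef]; simp [Equiv.Perm.mul_apply, Equiv.swap_apply_right]
  have hws : w * Equiv.swap i (i + 1) = W := by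
    rw [hwdef, mul_assoc, Equiv.swap_mul_self, mul_one]
  have hne_vi : ∀ v : Equiv.Perm ℕ, v i ≠ v (i + 1) :=
    fun v hv => by have := v.injective hv; omega
  -- the key specialized identity
  have key : ∀ v : Equiv.Perm ℕ,
      (X (v i) - X (v (i + 1))) * Fr v (S w) =
        Fr v (S W) - Fr (v * Equiv.swap i (i + 1)) (S W) := by
    intro v
    have := congrArg (Fr v) hrec
    rw [map_mul, map_sub, map_sub, Fr_X_inl, Fr_X_inl, Fr_sX] at this
    exact this
  have hGw1 : (S w).IsHomogeneous (ell w) := by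
    apply isHomogeneous_of_mul
      (p := (X (Sum.inl i) - X (Sum.inl (i + 1)) : MvPolynomial (ℕ ⊕ ℕ) ℤ))
    · exact (isHomogeneous_X _ _).sub (isHomogeneous_X _ _)
    · exact X_sub_X_ne_zero (fun hc => by simp at hc)
    · rw [hrec, ← hellW]
      exact hG.1.sub (hG.1.rename_isHomogeneous)
  refine ⟨hGw1, ?_, ?_, ?_⟩
  · intro v hfinv hlt
    have h1 : Fr v (S W) = 0 := hG.2.1 v hfinv (by omega)
    have h2 : Fr (v * Equiv.swap i (i + 1)) (S W) = 0 := by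
      apply hG.2.1 _ (finSupp_mul_swap hfinv i (i + 1))
      rcases lt_or_gt_of_ne (hne_vi v) with hvasc | hvdesc
      · rw [ell_mul_swap_ascent hfinv hvasc]; omega
      · have := ell_mul_swap_descent hfinv hvdesc; omega
    have h3 := key v
    rw [h1, h2, sub_zero] at h3
    rcases mul_eq_zero.mp h3 with hc | hc
    · exact absurd hc (X_sub_X_ne_zero (hne_vi v))
    · exact hc
  · intro v hfinv heq hnew
    have h1 : Fr v (S W) = 0 := hG.2.1 v hfinv (by omega)
    have h2 : Fr (v * Equiv.swap i (i + 1)) (S W) = 0 := by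
      rcases lt_or_gt_of_ne (hne_vi v) with hvasc | hvdesc
      · have hl : ell (v * Equiv.swap i (i + 1)) = ell W := by
          rw [ell_mul_swap_ascent hfinv hvasc]; omega
        apply hG.2.2.1 _ (finSupp_mul_swap hfinv i (i + 1)) hl
        intro hc
        apply hnew
        have h5 := congrArg (fun x => x * Equiv.swap i (i + 1)) hc
        rw [mul_assoc, Equiv.swap_mul_self, mul_one] at h5
        rw [h5, ← hws, mul_assoc, Equiv.swap_mul_self, mul_one]
      · apply hG.2.1 _ (finSupp_mul_swap hfinv i (i + 1))
        have := ell_mul_swap_descent hfinv hvdesc; omega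
    have h3 := key v
    rw [h1, h2, sub_zero] at h3
    rcases mul_eq_zero.mp h3 with hc | hc
    · exact absurd hc (X_sub_X_ne_zero (hne_vi v))
    · exact hc
  · have h1 : Fr w (S W) = 0 := hG.2.1 w hfinw (by omega)
    have h3 := key w
    rw [h1, hws, zero_sub] at h3
    intro hc
    rw [hc, mul_zero] at h3
    exact hG.2.2.2 (neg_eq_zero.mp h3.symm)

lemma sgood_all (hS : IsSchubertFamily S) : ∀ w : Equiv.Perm ℕ, FinSupp w → SGood S w := by
  intro w hfin
  obtain ⟨N, hbnd⟩ := exists_bnd hfin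
  suffices h : ∀ t (w : Equiv.Perm ℕ), Bnd w N → CN N - ell w ≤ t → SGood S w from
    h (CN N - ell w) w hbnd le_rfl
  intro t
  induction t with
  | zero =>
    intro w hbnd ht
    have h1 := ell_le_CN hbnd
    have h2 : ell w = CN N := by omega
    rw [eq_longest_of_ell (finSupp_of_bnd hbnd) hbnd h2]
    exact sgood_longest hS N
  | succ t ih =>
    intro w hbnd ht
    by_cases hw : w = longest N
    · rw [hw]; exact sgood_longest hS N
    obtain ⟨i, hi, hasc⟩ := exists_ascent hbnd hw
    set W := w * Equiv.swap i (i + 1) with hW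
    have hellW : ell W = ell w + 1 := ell_mul_swap_ascent (finSupp_of_bnd hbnd) hasc
    have hbndW : Bnd W N := bnd_mul_swap hbnd hi
    have hby : CN N - ell W ≤ t := by
      have := ell_le_CN hbndW
      omega
    have hGW := ih W hbndW hby
    have hdesc : W (i + 1) < W i := by
      have e1 : W i = w (i + 1) := by rw [hW]; simp [Equiv.Perm.mul_apply, Equiv.swap_apply_left]
      have e2 : W (i + 1) = w i := by
        rw [hW]; simp [Equiv.Perm.mul_apply, Equiv.swap_apply_right]
      omega
    have hstep := sgood_step hS (finSupp_of_bnd hbndW) hdesc hGW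
    rwa [show W * Equiv.swap i (i + 1) = w from by
      rw [hW, mul_assoc, Equiv.swap_mul_self, mul_one]] at hstep

end St15
namespace St15

open MvPolynomial

lemma bnd_of_descents {v : Equiv.Perm ℕ} {E L : ℕ} (hfin : FinSupp v)
    (hdesc : ∀ k, v (k + 1) < v k → k < E) (hl : ell v ≤ L) : Bnd v (E + L) := by
  classical
  obtain ⟨N0, hN0⟩ := exists_bnd hfin
  have hnd : ∀ t, E ≤ t → ¬ v (t + 1) < v t := fun t ht hc => by have := hdesc _ hc; omega
  have hle : ∀ k, E ≤ k → v k ≤ k := le_self_of_noDescent hN0 hnd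
  have hmono := mono_of_noDescent hnd
  intro k hk
  by_contra hne
  have hvk : v k < k := lt_of_le_of_ne (hle k (by omega)) hne
  have hall : ∀ j, E ≤ j → j ≤ k → v j < j := by
    intro j hj1 hj2
    have := hmono (k - j) j hj1
    rw [show j + (k - j) = k by omega] at this
    omega
  have hinv : ∀ j, v j < j → ∃ p, p < j ∧ v j < v p := by
    intro j hj
    by_contra hcon
    push_neg at hcon
    have hcard := Finset.card_le_card_of_injOn v
      (s := Finset.range j) (t := Finset.range (v j)) ?_ ?_
    · rw [Finset.card_range, Finset.card_range] at hcard
      omega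
    · intro p hp
      rw [Finset.mem_coe, Finset.mem_range] at hp ⊢
      have h1 := hcon p hp
      have h2 : v p ≠ v j := fun he => by have := v.injective he; omega
      omega
    · intro a _ b _ hab
      exact v.injective hab
  set g : ℕ → ℕ := fun j => if h : ∃ p, p < j ∧ v j < v p then h.choose else 0 with hg
  have hgspec : ∀ j, E ≤ j → j ≤ k → g j < j ∧ v j < v (g j) := by
    intro j h1 h2
    have hex := hinv j (hall j h1 h2)
    rw [hg]
    dsimp only
    rw [dif_pos hex]
    exact hex.choose_spec
  have himg : (fun j => (g j, j)) '' (Set.Icc E k) ⊆ invSet v := by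
    rintro _ ⟨j, hj, rfl⟩
    rw [Set.mem_Icc] at hj
    exact ⟨(hgspec j hj.1 hj.2).1, (hgspec j hj.1 hj.2).2⟩
  have hcard : (Set.Icc E k).ncard ≤ ell v := by
    rw [ell_def]
    calc (Set.Icc E k).ncard
        = ((fun j => (g j, j)) '' Set.Icc E k).ncard :=
          (Set.ncard_image_of_injOn (fun a _ b _ hab => (Prod.ext_iff.mp hab).2)).symm
      _ ≤ (invSet v).ncard := Set.ncard_le_ncard himg (invSet_finite hfin)
  have hIcc : (Set.Icc E k).ncard = k + 1 - E := by
    rw [← Finset.coe_Icc, Set.ncard_coe_finset, Nat.card_Icc]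
  omega

lemma perm_set_finite (E L : ℕ) :
    {v : Equiv.Perm ℕ | FinSupp v ∧ (∀ k, v (k + 1) < v k → k < E) ∧ ell v ≤ L}.Finite := by
  classical
  set B := E + L with hB
  set T := {v : Equiv.Perm ℕ | FinSupp v ∧ (∀ k, v (k + 1) < v k → k < E) ∧ ell v ≤ L} with hT
  have hbnd : ∀ v ∈ T, Bnd v B := fun v hv => bnd_of_descents hv.1 hv.2.1 hv.2.2
  apply Set.Finite.of_finite_image (f := fun (v : Equiv.Perm ℕ) => fun (q : Fin B) => v ↑q)
  · apply Set.Finite.subset (Set.Finite.pi' (t := fun _ : Fin B => Set.Iio B)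
      (fun _ => Set.finite_Iio B))
    rintro f ⟨v, hv, rfl⟩
    intro q
    exact bnd_lt (hbnd v hv) q.2
  · intro v1 hv1 v2 hv2 he
    apply Equiv.ext
    intro q
    by_cases hq : q < B
    · exact congrFun he ⟨q, hq⟩
    · rw [hbnd v1 hv1 q (by omega), hbnd v2 hv2 q (by omega)]

lemma codim_rank (n : ℕ) {e : ℕ → ℕ} {w : ℕ → Equiv.Perm ℕ} {r : ℕ → ℕ → ℕ}
    (hr : RankEq n e w r) : codim n (rank e w) = codim n r := by
  unfold codim
  apply Finset.sum_congr rfl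
  intro i hi
  apply Finset.sum_congr rfl
  intro j hj
  rw [Finset.mem_range] at hi hj
  by_cases hij : i < j
  · rw [if_pos hij, if_pos hij, hr i (j - 1) (by omega) (by omega),
      hr i j (by omega) (by omega), hr (i + 1) j (by omega) (by omega)]
  · rw [if_neg hij, if_neg hij]

lemma diag_set_finite (n : ℕ) (e : ℕ → ℕ) (r : ℕ → ℕ → ℕ) :
    {w : ℕ → Equiv.Perm ℕ | IsMinimal n e w ∧ RankEq n e w r}.Finite := by
  classical
  set L := codim n r with hL
  set G : (Fin n → Equiv.Perm ℕ) → (ℕ → Equiv.Perm ℕ) := fun c i =>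
    if h : 1 ≤ i ∧ i ≤ n then c ⟨i - 1, by omega⟩ else 1 with hG
  apply Set.Finite.subset (Set.Finite.image G (Set.Finite.pi'
    (t := fun j : Fin n => {v : Equiv.Perm ℕ | FinSupp v ∧
      (∀ k, v (k + 1) < v k → k < e (j.1 + 1)) ∧ ell v ≤ L})
    (fun j => perm_set_finite (e (j.1 + 1)) L)))
  rintro w ⟨⟨hlace, hmin⟩, hrank⟩
  refine ⟨fun j => w (j.1 + 1), ?_, ?_⟩
  · intro j
    have hj := hlace.2 (j.1 + 1) (by omega) (by omega)
    refine ⟨hj.1, hj.2.1, ?_⟩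
    have hdl : diagLength n w = L := by
      rw [hmin, hL]
      exact codim_rank n hrank
    rw [← hdl]
    exact Finset.single_le_sum (f := fun i => ell (w i)) (fun i _ => Nat.zero_le _)
      (Finset.mem_Icc.mpr ⟨by omega, by omega⟩)
  · funext i
    rw [hG]
    dsimp only
    by_cases h : 1 ≤ i ∧ i ≤ n
    · rw [dif_pos h]
      congr 1
      omega
    · rw [dif_neg h]
      exact (hlace.1 i (by omega)).symm

lemma startDot_fst_le (e : ℕ → ℕ) (u : ℕ → Equiv.Perm ℕ) :
    ∀ c q, (startDot e u c q).1 ≤ c := by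
  intro c
  induction c with
  | zero => intro q; exact le_rfl
  | succ c ih =>
    intro q
    rw [startDot]
    split_ifs with h
    · exact le_trans (ih _) (by omega)
    · exact le_rfl

lemma startDot_injective (e : ℕ → ℕ) (u : ℕ → Equiv.Perm ℕ) (c : ℕ) :
    Function.Injective (startDot e u c) := by
  induction c with
  | zero =>
    intro a b h
    exact (Prod.ext_iff.mp h).2
  | succ c ih =>
    intro a b h
    rw [startDot, startDot] at h
    split_ifs at h with h1 h2 h2
    · exact (u (c + 1)).injective (ih h)
    · exfalso
      have := startDot_fst_le e u c (u (c + 1) a)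
      have h3 := (Prod.ext_iff.mp h).1
      dsimp only at h3
      omega
    · exfalso
      have := startDot_fst_le e u c (u (c + 1) b)
      have h3 := (Prod.ext_iff.mp h).1
      dsimp only at h3
      omega
    · exact (Prod.ext_iff.mp h).2

def hmap (e : ℕ → ℕ) (u : ℕ → Equiv.Perm ℕ) (c : ℕ) : ℕ → ℕ × ℕ :=
  fun p => if p < e c then startDot e u c p else (c + 1, (u (c + 1))⁻¹ p)

lemma hmap_injective (e : ℕ → ℕ) (u : ℕ → Equiv.Perm ℕ) (c : ℕ) :
    Function.Injective (hmap e u c) := by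
  intro a b h
  unfold hmap at h
  split_ifs at h with h1 h2 h2
  · exact startDot_injective e u c h
  · exfalso
    have := startDot_fst_le e u c a
    have h3 := (Prod.ext_iff.mp h).1
    omega
  · exfalso
    have := startDot_fst_le e u c b
    have h3 := (Prod.ext_iff.mp h).1
    omega
  · have h3 := (Prod.ext_iff.mp h).2
    exact (u (c + 1))⁻¹.injective h3

lemma hmap_comp (e : ℕ → ℕ) (u : ℕ → Equiv.Perm ℕ) (c : ℕ) (a : ℕ) :
    hmap e u c (u (c + 1) a) = startDot e u (c + 1) a := by
  rw [startDot]
  unfold hmap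
  split_ifs with h
  · rfl
  · rw [Prod.mk.injEq]
    exact ⟨rfl, (u (c + 1)).symm_apply_apply a⟩

lemma rename_congr_vars {σ τ : Type*} {f g : σ → τ} {p : MvPolynomial σ ℤ}
    (h : ∀ v ∈ p.vars, f v = g v) : rename f p = rename g p := by
  have := hom_congr_vars (f₁ := (rename (R := ℤ) f).toRingHom)
    (f₂ := (rename (R := ℤ) g).toRingHom) ?_ ?_ (rfl : p = p)
  · exact this
  · ext x
    simp
  · intro i hi _
    simp only [AlgHom.toRingHom_eq_coe, RingHom.coe_coe, rename_X]
    rw [h i hi]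

end St15

namespace St15

open MvPolynomial

lemma factor_eq {S : Equiv.Perm ℕ → MvPolynomial (ℕ ⊕ ℕ) ℤ} (hS : IsSchubertFamily S)
    {n : ℕ} {e : ℕ → ℕ} {w u : ℕ → Equiv.Perm ℕ}
    (hw : IsLace n e w) {i : ℕ} (h1 : 1 ≤ i) (h2 : i ≤ n) :
    phiMap e u (rename (Sum.elim (fun a => (i, a)) fun b => (i - 1, b)) (S (w i)))
      = rename (hmap e u (i - 1)) (Fr (u i) (S (w i))) := by
  obtain ⟨c, rfl⟩ : ∃ c, i = c + 1 := ⟨i - 1, by omega⟩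
  show (rename _) ((rename _) (S (w (c + 1)))) = (rename _) ((rename _) (S (w (c + 1))))
  rw [rename_rename, rename_rename]
  apply rename_congr_vars
  intro v hv
  obtain ⟨hfin, hd1, hd2⟩ := hw.2 (c + 1) (by omega) h2
  have hd2' : ∀ k, (w (c + 1))⁻¹ (k + 1) < (w (c + 1))⁻¹ k → k < e c := by
    simpa using hd2
  have hvars := hS.2.2 (w (c + 1)) hfin (e (c + 1)) (e c)
    (fun t ht hc => absurd (hd1 t hc) (by omega))
    (fun t ht hc => absurd (hd2' t hc) (by omega)) v hv
  rcases hvars with ⟨a, _, rfl⟩ | ⟨b, hb, rfl⟩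
  · show startDot e u (c + 1) a = hmap e u c (u (c + 1) a)
    exact (hmap_comp e u c a).symm
  · show startDot e u c b = hmap e u c b
    unfold hmap
    rw [if_pos hb]

lemma phi_Sprod {S : Equiv.Perm ℕ → MvPolynomial (ℕ ⊕ ℕ) ℤ} (hS : IsSchubertFamily S)
    {n : ℕ} {e : ℕ → ℕ} {w u : ℕ → Equiv.Perm ℕ} (hw : IsLace n e w) :
    phiMap e u (Sprod n S w)
      = ∏ i ∈ Finset.Icc 1 n, rename (hmap e u (i - 1)) (Fr (u i) (S (w i))) := by
  rw [Sprod, map_prod]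
  apply Finset.prod_congr rfl
  intro i hi
  rw [Finset.mem_Icc] at hi
  exact factor_eq hS hw hi.1 hi.2

end St15

open St15 in
theorem phi_Qpoly_diagonal' (n : ℕ) (hn : 1 ≤ n) (e : ℕ → ℕ) (r : ℕ → ℕ → ℕ)
    (S : Equiv.Perm ℕ → MvPolynomial (ℕ ⊕ ℕ) ℤ) (hS : IsSchubertFamily S)
    (u : ℕ → Equiv.Perm ℕ) (hu : IsMinimal n e u) (hur : RankEq n e u r) :
    (∀ w, IsMinimal n e w → RankEq n e w r → w ≠ u → phiMap e u (Sprod n S w) = 0) ∧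
    phiMap e u (Qpoly n e r S) = phiMap e u (Sprod n S u) ∧
    phiMap e u (Sprod n S u) ≠ 0 ∧
    (phiMap e u (Sprod n S u)).IsHomogeneous (codim n r) := by
  classical
  obtain ⟨hulace, humin⟩ := hu
  have hufin : ∀ i, 1 ≤ i → i ≤ n → FinSupp (u i) := fun i a b => (hulace.2 i a b).1
  have part1 : ∀ w, IsMinimal n e w → RankEq n e w r → w ≠ u →
      phiMap e u (Sprod n S w) = 0 := by
    intro w hwmin hwr hne
    rw [phi_Sprod hS hwmin.1]
    by_contra hprod
    have hfac : ∀ i ∈ Finset.Icc 1 n, Fr (u i) (S (w i)) ≠ 0 := by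
      intro i hi hzero
      exact hprod (Finset.prod_eq_zero hi (by rw [hzero, map_zero]))
    have hsum : ∑ i ∈ Finset.Icc 1 n, ell (w i) = ∑ i ∈ Finset.Icc 1 n, ell (u i) := by
      have e1 : diagLength n w = codim n r := by rw [hwmin.2]; exact codim_rank n hwr
      have e2 : diagLength n u = codim n r := by rw [humin]; exact codim_rank n hur
      have e1' : ∑ i ∈ Finset.Icc 1 n, ell (w i) = codim n r := e1
      have e2' : ∑ i ∈ Finset.Icc 1 n, ell (u i) = codim n r := e2
      omega
    have hle : ∀ i ∈ Finset.Icc 1 n, ell (w i) ≤ ell (u i) := by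
      intro i hi
      rw [Finset.mem_Icc] at hi
      have hg := sgood_all hS (w i) ((hwmin.1.2 i hi.1 hi.2).1)
      by_contra hlt
      push_neg at hlt
      exact hfac i (Finset.mem_Icc.mpr hi) (hg.2.1 (u i) (hufin i hi.1 hi.2) hlt)
    have hex : ∃ i ∈ Finset.Icc 1 n, w i ≠ u i := by
      by_contra hall
      push_neg at hall
      apply hne
      funext i
      by_cases h : 1 ≤ i ∧ i ≤ n
      · exact hall i (Finset.mem_Icc.mpr h)
      · rw [hwmin.1.1 i (by omega), hulace.1 i (by omega)]
    obtain ⟨i0, hi0, hne0⟩ := hex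
    have hmem := Finset.mem_Icc.mp hi0
    have hg0 := sgood_all hS (w i0) ((hwmin.1.2 i0 hmem.1 hmem.2).1)
    have hstrict : ell (w i0) < ell (u i0) := by
      rcases lt_or_eq_of_le (hle i0 hi0) with h | h
      · exact h
      · exact absurd (hg0.2.2.1 (u i0) (hufin i0 hmem.1 hmem.2) h.symm
          (fun hc => hne0 hc.symm)) (hfac i0 hi0)
    have := Finset.sum_lt_sum hle ⟨i0, hi0, hstrict⟩
    omega
  have hne0 : phiMap e u (Sprod n S u) ≠ 0 := by
    rw [phi_Sprod hS hulace]
    rw [Finset.prod_ne_zero_iff]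
    intro i hi
    rw [Finset.mem_Icc] at hi
    have hg := sgood_all hS (u i) (hufin i hi.1 hi.2)
    intro h0
    apply hg.2.2.2
    apply rename_injective (R := ℤ) _ (hmap_injective e u (i - 1))
    rw [h0, map_zero]
  have hhom : (phiMap e u (Sprod n S u)).IsHomogeneous (codim n r) := by
    have hprod := MvPolynomial.IsHomogeneous.prod (Finset.Icc 1 n)
      (fun i => rename (Sum.elim (fun a => (i, a)) fun b => (i - 1, b)) (S (u i)))
      (fun i => ell (u i)) (fun i hi => by
        rw [Finset.mem_Icc] at hi
        exact ((sgood_all hS (u i) (hufin i hi.1 hi.2)).1).rename_isHomogeneous)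
    have e2 : diagLength n u = codim n r := by rw [humin]; exact codim_rank n hur
    have e3 : ∑ i ∈ Finset.Icc 1 n, ell (u i) = codim n r := e2
    rw [e3] at hprod
    have h1 : (Sprod n S u).IsHomogeneous (codim n r) := hprod
    exact h1.rename_isHomogeneous
  refine ⟨part1, ?_, hne0, hhom⟩
  set T := {w : ℕ → Equiv.Perm ℕ | IsMinimal n e w ∧ RankEq n e w r} with hT
  have hTfin : (T ∩ Function.support (Sprod n S)).Finite :=
    ((diag_set_finite n e r).inter_of_left _)
  have hQe : Qpoly n e r S = ∑ w ∈ hTfin.toFinset, Sprod n S w := by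
    unfold Qpoly
    exact finsum_mem_eq_sum (fun w => Sprod n S w) hTfin
  rw [hQe, map_sum]
  have hSu0 : Sprod n S u ≠ 0 := fun h0 => hne0 (by rw [h0, map_zero])
  apply Finset.sum_eq_single_of_mem u
  · rw [Set.Finite.mem_toFinset]
    exact ⟨⟨⟨hulace, humin⟩, hur⟩, hSu0⟩
  · intro w hwmem hwne
    rw [Set.Finite.mem_toFinset] at hwmem
    exact part1 w hwmem.1.1 hwmem.1.2 hwne


/-- for a minimal lace diagram `u` with rank conditions `r`,
`φ_u(S(w)) = 0` for every other minimal lace diagram `w` with rank conditions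
`r`; consequently `φ_u(Q_r) = φ_u(S(u))`, which is a nonzero polynomial in the
strand variables, homogeneous of degree `d r`. -/
theorem phi_Qpoly_diagonal (n : ℕ) (hn : 1 ≤ n) (e : ℕ → ℕ) (r : ℕ → ℕ → ℕ)
    (S : Equiv.Perm ℕ → MvPolynomial (ℕ ⊕ ℕ) ℤ) (hS : IsSchubertFamily S)
    (u : ℕ → Equiv.Perm ℕ) (hu : IsMinimal n e u) (hur : RankEq n e u r) :
    (∀ w, IsMinimal n e w → RankEq n e w r → w ≠ u → phiMap e u (Sprod n S w) = 0) ∧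
    phiMap e u (Qpoly n e r S) = phiMap e u (Sprod n S u) ∧
    phiMap e u (Sprod n S u) ≠ 0 ∧
    (phiMap e u (Sprod n S u)).IsHomogeneous (codim n r) :=
  phi_Qpoly_diagonal' n hn e r S hS u hu hur
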